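/- Let A be a nonnegative selfadjoint operator on a complex Hilbert space X with 0 ∈ σ(A) but 0 not an eigenvalue. For α > 0, the range R(A^α) equipped with the inner product ⟨x,y⟩_{R(A^α)} = ⟨x,y⟩_X + ∫₀^∞ t^{2α-1} ⟨e^{-tA}x, e^{-tA}y⟩_X dt is a Hilbert space (i.e., it is complete). -/

import Mathlib

/-!
By the spectral theorem, every nonnegative selfadjoint operator `A` on a complex
Hilbert space `X` (with trivial kernel) is unitarily equivalent to multiplication by a
measurable function `a ≥ 0` (with `a > 0` a.e.) on some `L²(μ)`.  We formalize the
statement in this spectral model: `X = L²(μ)`, `(e^{-tA}x)(i) = exp(-t·a i)·x i`,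
`(A^α y)(i) = (a i)^α·y i`, and `x ∈ R(A^α)` iff `x = A^α y` for some `y ∈ L²(μ)`.
-/

open MeasureTheory Filter
open scoped ENNReal NNReal Topology

/-- `‖e^{-tA} x‖²` in the spectral model. -/
noncomputable def heatNormSq {ι : Type*} [MeasurableSpace ι] (μ : Measure ι)
    (a : ι → ℝ) (x : ι → ℂ) (t : ℝ) : ℝ≥0∞ :=
  ∫⁻ i, (‖x i‖₊ : ℝ≥0∞) ^ 2 * ENNReal.ofReal (Real.exp (-(2 * t * a i))) ∂μ

/-- `∫₀^∞ t^{2α-1} ‖e^{-tA} x‖² dt` in the spectral model; this is the square of the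
norm `|||x|||_{R(A^α)}`. -/
noncomputable def rangeIntegral {ι : Type*} [MeasurableSpace ι] (μ : Measure ι)
    (a : ι → ℝ) (α : ℝ) (x : ι → ℂ) : ℝ≥0∞ :=
  ∫⁻ t in Set.Ioi (0 : ℝ), ENNReal.ofReal (t ^ (2 * α - 1)) * heatNormSq μ a x t

/-- The constant `2^{-2α} Γ(2α)` appearing when evaluating the `t`-integral. -/
noncomputable def Cconst (α : ℝ) : ℝ := (2:ℝ) ^ (-(2*α)) * Real.Gamma (2*α)

lemma Cconst_pos {α : ℝ} (hα : 0 < α) : 0 < Cconst α := by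
  have := Real.Gamma_pos_of_pos (by linarith : 0 < 2*α)
  unfold Cconst; positivity

lemma lint_gamma {s r : ℝ} (hs : 0 < s) (hr : 0 < r) :
    ∫⁻ t in Set.Ioi (0:ℝ), ENNReal.ofReal (t ^ (s - 1)) * ENNReal.ofReal (Real.exp (-(r * t)))
      = ENNReal.ofReal ((1 / r) ^ s * Real.Gamma s) := by
  have hint : IntegrableOn (fun t : ℝ => t ^ (s - 1) * Real.exp (-(r * t))) (Set.Ioi 0) := by
    have h := integrableOn_rpow_mul_exp_neg_mul_rpow (p := 1) (s := s - 1) (b := r)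
      (by linarith) one_pos hr
    refine h.congr_fun (fun t ht => ?_) measurableSet_Ioi
    simp only [Real.rpow_one]
    ring_nf
  rw [← Real.integral_rpow_mul_exp_neg_mul_Ioi hs hr,
    MeasureTheory.ofReal_integral_eq_lintegral_ofReal hint ?_]
  · refine (setLIntegral_congr_fun_ae measurableSet_Ioi (ae_of_all _ fun t ht => ?_))
    rw [← ENNReal.ofReal_mul (Real.rpow_nonneg (le_of_lt ht) _)]
  · filter_upwards [self_mem_ae_restrict measurableSet_Ioi] with t (ht : (0:ℝ) < t)
    positivity

lemma inner_int {α b : ℝ} (hα : 0 < α) (hb : 0 < b) :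
    ∫⁻ t in Set.Ioi (0:ℝ), ENNReal.ofReal (t ^ (2*α - 1))
        * ENNReal.ofReal (Real.exp (-(2 * t * b)))
      = ENNReal.ofReal (Cconst α * b ^ (-(2*α))) := by
  have h : ∫⁻ t in Set.Ioi (0:ℝ), ENNReal.ofReal (t ^ (2*α - 1))
        * ENNReal.ofReal (Real.exp (-((2*b) * t)))
      = ENNReal.ofReal ((1 / (2*b)) ^ (2*α) * Real.Gamma (2*α)) :=
    lint_gamma (by linarith) (by linarith)
  have e1 : ∀ t : ℝ, -(2 * t * b) = -((2*b) * t) := fun t => by ring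
  simp_rw [e1]
  rw [h]
  congr 1
  rw [one_div, Real.inv_rpow (by positivity), ← Real.rpow_neg (by positivity),
    Real.mul_rpow (by norm_num : (0:ℝ) ≤ 2) hb.le]
  unfold Cconst; ring

lemma sq_eLpNorm {ι : Type*} [MeasurableSpace ι] {μ : Measure ι} (x : ι → ℂ) :
    (eLpNorm x 2 μ) ^ 2 = ∫⁻ i, (‖x i‖₊ : ℝ≥0∞) ^ 2 ∂μ := by
  rw [eLpNorm_eq_lintegral_rpow_enorm_toReal two_ne_zero ENNReal.ofNat_ne_top]
  rw [← ENNReal.rpow_natCast _ 2, ← ENNReal.rpow_mul]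
  norm_num
  rfl

lemma rangeIntegral_eq_weighted {ι : Type*} [MeasurableSpace ι] {μ : Measure ι} {a : ι → ℝ}
    (hameas : Measurable a) (ha0 : ∀ i, 0 ≤ a i) (hker : ∀ᵐ i ∂μ, a i ≠ 0)
    {α : ℝ} (hα : 0 < α) {x : ι → ℂ} (hx : MemLp x 2 μ) :
    rangeIntegral μ a α x
      = ENNReal.ofReal (Cconst α)
          * ∫⁻ i, (‖x i‖₊ : ℝ≥0∞) ^ 2 * ENNReal.ofReal ((a i) ^ (-(2*α))) ∂μ := by
  obtain ⟨g, hgmeas, hxg⟩ := hx.aestronglyMeasurable.aemeasurable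
  have hnorm : ∀ᵐ i ∂μ, (‖x i‖₊ : ℝ≥0∞) = (‖g i‖₊ : ℝ≥0∞) := by
    filter_upwards [hxg] with i hi; rw [hi]
  have hheat : ∀ t, heatNormSq μ a x t = heatNormSq μ a g t := fun t =>
    lintegral_congr_ae (by filter_upwards [hnorm] with i hi; rw [hi])
  have hw : (∫⁻ i, (‖x i‖₊ : ℝ≥0∞) ^ 2 * ENNReal.ofReal ((a i) ^ (-(2*α))) ∂μ)
      = ∫⁻ i, (‖g i‖₊ : ℝ≥0∞) ^ 2 * ENNReal.ofReal ((a i) ^ (-(2*α))) ∂μ :=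
    lintegral_congr_ae (by filter_upwards [hnorm] with i hi; rw [hi])
  have hfin : (∫⁻ i, (‖g i‖₊ : ℝ≥0∞) ^ 2 ∂μ) ≠ ∞ := by
    have h1 : (∫⁻ i, (‖g i‖₊ : ℝ≥0∞) ^ 2 ∂μ) = (eLpNorm x 2 μ) ^ 2 := by
      rw [sq_eLpNorm]
      exact lintegral_congr_ae (hnorm.mono fun i hi => by simp only []; rw [hi])
    rw [h1]
    exact ENNReal.pow_ne_top hx.eLpNorm_ne_top
  set ν : Measure ι := μ.withDensity (fun i => (‖g i‖₊ : ℝ≥0∞) ^ 2) with hν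
  have hgm : Measurable fun i => (‖g i‖₊ : ℝ≥0∞) ^ 2 :=
    (hgmeas.nnnorm.coe_nnreal_ennreal.pow measurable_const)
  haveI : IsFiniteMeasure ν := isFiniteMeasure_withDensity hfin
  have hwd : ∀ {h : ι → ℝ≥0∞}, Measurable h →
      ∫⁻ i, (‖g i‖₊ : ℝ≥0∞) ^ 2 * h i ∂μ = ∫⁻ i, h i ∂ν := by
    intro h hh
    rw [hν, lintegral_withDensity_eq_lintegral_mul μ hgm hh]
    rfl
  rw [hw]
  unfold rangeIntegral
  simp_rw [hheat]
  unfold heatNormSq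
  have hexpm : ∀ t : ℝ, Measurable fun i => ENNReal.ofReal (Real.exp (-(2 * t * a i))) :=
    fun t => (((measurable_const.mul hameas).neg).exp).ennreal_ofReal
  have hmeas2 : Measurable (Function.uncurry fun (t : ℝ) (i : ι) =>
      ENNReal.ofReal (t ^ (2*α - 1)) * ENNReal.ofReal (Real.exp (-(2 * t * a i)))) := by
    apply Measurable.mul (f := fun p : ℝ × ι => ENNReal.ofReal (p.1 ^ (2*α - 1)))
      (g := fun p : ℝ × ι => ENNReal.ofReal (Real.exp (-(2 * p.1 * a p.2))))
    · exact (measurable_fst.pow_const _).ennreal_ofReal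
    · exact (((measurable_const.mul measurable_fst).mul
        (hameas.comp measurable_snd)).neg.exp).ennreal_ofReal
  calc
    ∫⁻ t in Set.Ioi (0:ℝ), ENNReal.ofReal (t ^ (2*α - 1))
        * ∫⁻ i, (‖g i‖₊ : ℝ≥0∞) ^ 2 * ENNReal.ofReal (Real.exp (-(2 * t * a i))) ∂μ
      = ∫⁻ t in Set.Ioi (0:ℝ), ∫⁻ i, ENNReal.ofReal (t ^ (2*α - 1))
          * ENNReal.ofReal (Real.exp (-(2 * t * a i))) ∂ν := by
        refine lintegral_congr fun t => ?_
        rw [hwd (hexpm t), lintegral_const_mul' _ _ ENNReal.ofReal_ne_top]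
    _ = ∫⁻ i, (∫⁻ t in Set.Ioi (0:ℝ), ENNReal.ofReal (t ^ (2*α - 1))
          * ENNReal.ofReal (Real.exp (-(2 * t * a i)))) ∂ν :=
        lintegral_lintegral_swap hmeas2.aemeasurable
    _ = ∫⁻ i, ENNReal.ofReal (Cconst α * (a i) ^ (-(2*α))) ∂ν := by
        refine lintegral_congr_ae ?_
        have hker' : ∀ᵐ i ∂ν, a i ≠ 0 := (withDensity_absolutelyContinuous μ _).ae_le hker
        filter_upwards [hker'] with i hi
        exact inner_int hα ((ha0 i).lt_of_ne (Ne.symm hi))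
    _ = ENNReal.ofReal (Cconst α)
          * ∫⁻ i, (‖g i‖₊ : ℝ≥0∞) ^ 2 * ENNReal.ofReal ((a i) ^ (-(2*α))) ∂μ := by
        rw [hwd ((hameas.pow_const _).ennreal_ofReal)]
        rw [← lintegral_const_mul' _ _ ENNReal.ofReal_ne_top]
        refine lintegral_congr fun i => ?_
        rw [ENNReal.ofReal_mul (Cconst_pos hα).le]

lemma weighted_eq {ι : Type*} [MeasurableSpace ι] {μ : Measure ι} {a : ι → ℝ}
    (ha0 : ∀ i, 0 ≤ a i) (hker : ∀ᵐ i ∂μ, a i ≠ 0) {α : ℝ}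
    {x y : ι → ℂ} (hxy : x =ᵐ[μ] fun i => ((a i ^ α : ℝ) : ℂ) * y i) :
    ∫⁻ i, (‖x i‖₊ : ℝ≥0∞) ^ 2 * ENNReal.ofReal ((a i) ^ (-(2*α))) ∂μ
      = ∫⁻ i, (‖y i‖₊ : ℝ≥0∞) ^ 2 ∂μ := by
  refine lintegral_congr_ae ?_
  filter_upwards [hxy, hker] with i hx hi
  have hai : 0 < a i := (ha0 i).lt_of_ne (Ne.symm hi)
  have h1 : (‖x i‖₊ : ℝ≥0∞) = ENNReal.ofReal (a i ^ α) * (‖y i‖₊ : ℝ≥0∞) := by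
    rw [hx]
    push_cast [nnnorm_mul, Complex.nnnorm_real]
    rw [show ((‖a i ^ α‖₊ : ℝ≥0∞)) = ‖a i ^ α‖ₑ from rfl, Real.enorm_eq_ofReal (Real.rpow_nonneg (ha0 i) α)]
  rw [h1, mul_pow]
  have h2 : ENNReal.ofReal (a i ^ α) ^ 2 * ENNReal.ofReal (a i ^ (-(2*α))) = 1 := by
    rw [← ENNReal.ofReal_pow (Real.rpow_nonneg (ha0 i) α), ← ENNReal.ofReal_mul (by positivity),
      ← Real.rpow_natCast (a i ^ α) 2, ← Real.rpow_mul (ha0 i),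
      ← Real.rpow_add hai, show α * (2:ℕ) + -(2*α) = 0 by push_cast; ring, Real.rpow_zero,
      ENNReal.ofReal_one]
  calc ENNReal.ofReal (a i ^ α) ^ 2 * (‖y i‖₊ : ℝ≥0∞) ^ 2 * ENNReal.ofReal (a i ^ (-(2*α)))
      = (‖y i‖₊ : ℝ≥0∞) ^ 2 * (ENNReal.ofReal (a i ^ α) ^ 2 * ENNReal.ofReal (a i ^ (-(2*α)))) := by
        ring
    _ = (‖y i‖₊ : ℝ≥0∞) ^ 2 := by rw [h2, mul_one]

/-- `R(A^α)` with the inner product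
`⟨x,y⟩_{R(A^α)} = ⟨x,y⟩_X + ∫₀^∞ t^{2α-1}⟨e^{-tA}x, e^{-tA}y⟩ dt` is complete: every
Cauchy sequence (w.r.t. the induced norm, whose square is
`‖·‖²_X + rangeIntegral`) converges in `R(A^α)`. -/
theorem stmt1 {ι : Type*} [MeasurableSpace ι] (μ : Measure ι)
    (a : ι → ℝ) (hameas : Measurable a) (ha0 : ∀ i, 0 ≤ a i)
    (hker : ∀ᵐ i ∂μ, a i ≠ 0) (hspec : ∀ ε > (0 : ℝ), μ {i | a i < ε} ≠ 0)
    (α : ℝ) (hα : 0 < α) (u : ℕ → ι → ℂ)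
    (hmem : ∀ n, MemLp (u n) 2 μ ∧
      ∃ y : ι → ℂ, MemLp y 2 μ ∧ u n =ᵐ[μ] fun i => ((a i ^ α : ℝ) : ℂ) * y i)
    (hcauchy : ∀ ε > (0 : ℝ), ∃ N : ℕ, ∀ m ≥ N, ∀ n ≥ N,
      (eLpNorm (fun i => u m i - u n i) 2 μ) ^ 2
        + rangeIntegral μ a α (fun i => u m i - u n i) < ENNReal.ofReal ε) :
    ∃ v : ι → ℂ,
      (MemLp v 2 μ ∧
        ∃ y : ι → ℂ, MemLp y 2 μ ∧ v =ᵐ[μ] fun i => ((a i ^ α : ℝ) : ℂ) * y i) ∧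
      Tendsto (fun n => (eLpNorm (fun i => u n i - v i) 2 μ) ^ 2
        + rangeIntegral μ a α (fun i => u n i - v i)) atTop (𝓝 0) := by
  classical
  have hCpos : 0 < Cconst α := Cconst_pos hα
  choose hu y hy heq using hmem
  have hformula : ∀ {x z : ι → ℂ}, MemLp x 2 μ →
      (x =ᵐ[μ] fun i => ((a i ^ α : ℝ) : ℂ) * z i) →
      rangeIntegral μ a α x = ENNReal.ofReal (Cconst α) * (eLpNorm z 2 μ) ^ 2 := by
    intro x z hx hxz
    rw [rangeIntegral_eq_weighted hameas ha0 hker hα hx, weighted_eq ha0 hker hxz, sq_eLpNorm]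
  have hdiff : ∀ m n, (fun i => u m i - u n i)
      =ᵐ[μ] fun i => ((a i ^ α : ℝ) : ℂ) * (y m i - y n i) := by
    intro m n
    filter_upwards [heq m, heq n] with i h1 h2
    simp only [h1, h2]; ring
  have humem : ∀ m n, MemLp (fun i => u m i - u n i) 2 μ := fun m n => (hu m).sub (hu n)
  have hRI : ∀ m n, rangeIntegral μ a α (fun i => u m i - u n i)
      = ENNReal.ofReal (Cconst α) * (eLpNorm (fun i => y m i - y n i) 2 μ) ^ 2 :=
    fun m n => hformula (humem m n) (hdiff m n)
  let U : ℕ → Lp ℂ 2 μ := fun n => (hu n).toLp (u n)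
  let Y : ℕ → Lp ℂ 2 μ := fun n => (hy n).toLp (y n)
  have hUdist : ∀ m n, edist (U m) (U n) = eLpNorm (fun i => u m i - u n i) 2 μ := by
    intro m n
    rw [Lp.edist_def]
    refine eLpNorm_congr_ae ?_
    filter_upwards [(hu m).coeFn_toLp, (hu n).coeFn_toLp] with i h1 h2
    simp only [Pi.sub_apply, U, h1, h2]
  have hYdist : ∀ m n, edist (Y m) (Y n) = eLpNorm (fun i => y m i - y n i) 2 μ := by
    intro m n
    rw [Lp.edist_def]
    refine eLpNorm_congr_ae ?_
    filter_upwards [(hy m).coeFn_toLp, (hy n).coeFn_toLp] with i h1 h2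
    simp only [Pi.sub_apply, Y, h1, h2]
  have sq_lt : ∀ {w : ℝ≥0∞} {ε : ℝ}, 0 < ε → w ^ 2 < ENNReal.ofReal (ε ^ 2) →
      w < ENNReal.ofReal ε := by
    intro w ε hε h
    by_contra hcon
    push_neg at hcon
    rw [ENNReal.ofReal_pow hε.le] at h
    exact absurd h (not_lt.mpr (pow_le_pow_left₀ zero_le hcon 2))
  have hUc : CauchySeq U := by
    rw [Metric.cauchySeq_iff]
    intro ε hε
    obtain ⟨N, hN⟩ := hcauchy (ε ^ 2) (by positivity)
    refine ⟨N, fun m hm n hn => ?_⟩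
    have h1 : (eLpNorm (fun i => u m i - u n i) 2 μ) ^ 2 < ENNReal.ofReal (ε ^ 2) :=
      lt_of_le_of_lt le_self_add (hN m hm n hn)
    have h2 := sq_lt hε h1
    rw [dist_edist, hUdist m n]
    exact ENNReal.toReal_lt_of_lt_ofReal h2
  have hYc : CauchySeq Y := by
    rw [Metric.cauchySeq_iff]
    intro ε hε
    obtain ⟨N, hN⟩ := hcauchy (Cconst α * ε ^ 2) (by positivity)
    refine ⟨N, fun m hm n hn => ?_⟩
    have h1 : ENNReal.ofReal (Cconst α) * (eLpNorm (fun i => y m i - y n i) 2 μ) ^ 2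
        < ENNReal.ofReal (Cconst α * ε ^ 2) := by
      rw [← hRI m n]
      exact lt_of_le_of_lt le_add_self (hN m hm n hn)
    rw [ENNReal.ofReal_mul hCpos.le] at h1
    have h2 : (eLpNorm (fun i => y m i - y n i) 2 μ) ^ 2 < ENNReal.ofReal (ε ^ 2) :=
      (ENNReal.mul_lt_mul_iff_right (ENNReal.ofReal_pos.mpr hCpos).ne' ENNReal.ofReal_ne_top).mp h1
    have h3 := sq_lt hε h2
    rw [dist_edist, hYdist m n]
    exact ENNReal.toReal_lt_of_lt_ofReal h3
  obtain ⟨V, hV⟩ := cauchySeq_tendsto_of_complete hUc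
  obtain ⟨Z, hZ⟩ := cauchySeq_tendsto_of_complete hYc
  set v : ι → ℂ := ⇑V with hv
  set z : ι → ℂ := ⇑Z with hz
  have hvmem : MemLp v 2 μ := Lp.memLp V
  have hzmem : MemLp z 2 μ := Lp.memLp Z
  have hUv : Tendsto (fun n => eLpNorm (fun i => u n i - v i) 2 μ) atTop (𝓝 0) := by
    have h1 : ∀ n, eLpNorm (fun i => u n i - v i) 2 μ = edist (U n) V := by
      intro n
      rw [Lp.edist_def]
      refine eLpNorm_congr_ae ?_
      filter_upwards [(hu n).coeFn_toLp] with i h1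
      simp only [Pi.sub_apply, U, h1, hv]
    simp_rw [h1, edist_dist]
    have h2 : Tendsto (fun n => dist (U n) V) atTop (𝓝 0) :=
      tendsto_iff_dist_tendsto_zero.mp hV
    have := (ENNReal.continuous_ofReal.tendsto 0).comp h2
    simpa [Function.comp_def] using this
  have hZz : Tendsto (fun n => eLpNorm (fun i => y n i - z i) 2 μ) atTop (𝓝 0) := by
    have h1 : ∀ n, eLpNorm (fun i => y n i - z i) 2 μ = edist (Y n) Z := by
      intro n
      rw [Lp.edist_def]
      refine eLpNorm_congr_ae ?_
      filter_upwards [(hy n).coeFn_toLp] with i h1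
      simp only [Pi.sub_apply, Y, h1, hz]
    simp_rw [h1, edist_dist]
    have h2 : Tendsto (fun n => dist (Y n) Z) atTop (𝓝 0) :=
      tendsto_iff_dist_tendsto_zero.mp hZ
    have := (ENNReal.continuous_ofReal.tendsto 0).comp h2
    simpa [Function.comp_def] using this
  -- almost-everywhere identification of the limit
  have tU : TendstoInMeasure μ u atTop v :=
    tendstoInMeasure_of_tendsto_eLpNorm (p := 2) two_ne_zero
      (fun n => (hu n).aestronglyMeasurable) hvmem.aestronglyMeasurable hUv
  obtain ⟨ns, hns, haeU⟩ := tU.exists_seq_tendsto_ae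
  have tYm : TendstoInMeasure μ y atTop z :=
    tendstoInMeasure_of_tendsto_eLpNorm (p := 2) two_ne_zero
      (fun n => (hy n).aestronglyMeasurable) hzmem.aestronglyMeasurable hZz
  have tY : TendstoInMeasure μ (fun k => y (ns k)) atTop z := fun ε hε =>
    (tYm ε hε).comp hns.tendsto_atTop
  obtain ⟨ms, hms, haeY⟩ := tY.exists_seq_tendsto_ae
  have hallEq : ∀ᵐ i ∂μ, ∀ n, u n i = ((a i ^ α : ℝ) : ℂ) * y n i := ae_all_iff.mpr heq
  have hvz : v =ᵐ[μ] fun i => ((a i ^ α : ℝ) : ℂ) * z i := by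
    filter_upwards [haeU, haeY, hallEq] with i h1 h2 h3
    have h1' : Tendsto (fun k => u (ns (ms k)) i) atTop (𝓝 (v i)) :=
      h1.comp hms.tendsto_atTop
    have h4 : Tendsto (fun k => u (ns (ms k)) i) atTop
        (𝓝 (((a i ^ α : ℝ) : ℂ) * z i)) := by
      have h5 := (tendsto_const_nhds (x := ((a i ^ α : ℝ) : ℂ)) (f := atTop)).mul h2
      refine h5.congr fun k => ?_
      exact (h3 (ns (ms k))).symm
    exact tendsto_nhds_unique h1' h4
  refine ⟨v, ⟨hvmem, z, hzmem, hvz⟩, ?_⟩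
  have hRIn : ∀ n, rangeIntegral μ a α (fun i => u n i - v i)
      = ENNReal.ofReal (Cconst α) * (eLpNorm (fun i => y n i - z i) 2 μ) ^ 2 := by
    intro n
    refine hformula ((hu n).sub hvmem) ?_
    filter_upwards [heq n, hvz] with i e1 e2
    simp only [e1, e2]; ring
  have heqfun : (fun n => (eLpNorm (fun i => u n i - v i) 2 μ) ^ 2
        + rangeIntegral μ a α (fun i => u n i - v i))
      = fun n => (eLpNorm (fun i => u n i - v i) 2 μ) ^ 2
        + ENNReal.ofReal (Cconst α) * (eLpNorm (fun i => y n i - z i) 2 μ) ^ 2 :=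
    funext fun n => by rw [hRIn n]
  rw [heqfun]
  have t1 : Tendsto (fun n => (eLpNorm (fun i => u n i - v i) 2 μ) ^ 2) atTop (𝓝 0) := by
    have := ENNReal.Tendsto.pow (n := 2) hUv
    simpa using this
  have t2 : Tendsto (fun n => ENNReal.ofReal (Cconst α)
      * (eLpNorm (fun i => y n i - z i) 2 μ) ^ 2) atTop (𝓝 0) := by
    have h := ENNReal.Tendsto.pow (n := 2) hZz
    have := ENNReal.Tendsto.const_mul (a := ENNReal.ofReal (Cconst α)) h (Or.inr ENNReal.ofReal_ne_top)
    simpa using this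
  simpa using t1.add t2
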